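/- Let Γ be a nonempty graph and for t ≥ 1 let a_t = lim_{n→∞} μ(contains Γ_t, n), where μ(P, n) is the maximum fraction of graphs on {1,...,n} in a P-intersecting family and Γ_t is t disjoint copies of Γ. Then a_{k+l} ≥ a_k · a_l for all k, l ≥ 1. -/

import Mathlib

/-- `G` contains a copy of `Γ`. -/
def ContainsCopy {α β : Type*} (Γ : SimpleGraph α) (G : SimpleGraph β) : Prop :=
  ∃ f : α ↪ β, ∀ a b, Γ.Adj a b → G.Adj (f a) (f b)

/-- `t` vertex-disjoint copies of `Γ`. -/
def disjointUnion {α : Type*} (Γ : SimpleGraph α) (t : ℕ) : SimpleGraph (α × Fin t) where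
  Adj x y := x.2 = y.2 ∧ Γ.Adj x.1 y.1
  symm := ⟨fun x y h => ⟨h.1.symm, Γ.adj_symm h.2⟩⟩
  loopless := ⟨fun x h => Γ.loopless.irrefl _ h.2⟩

/-- `μ(P, n)`: the maximum fraction of graphs on `{1,…,n}` in a `P`-intersecting family. -/
noncomputable def mu (n : ℕ) (P : SimpleGraph (Fin n) → Prop) : ℝ :=
  sSup {x : ℝ | ∃ F : Set (SimpleGraph (Fin n)),
    (∀ G ∈ F, ∀ H ∈ F, P (G ⊓ H)) ∧ x = F.ncard / 2 ^ n.choose 2}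

/-- Graph on a sum type with given parts and cross edges. -/
def crossGraph {β γ : Type*} (G₁ : SimpleGraph β) (G₂ : SimpleGraph γ)
    (b : β → γ → Prop) : SimpleGraph (β ⊕ γ) where
  Adj x y := match x, y with
    | .inl a, .inl a' => G₁.Adj a a'
    | .inl a, .inr c => b a c
    | .inr c, .inl a => b a c
    | .inr c, .inr c' => G₂.Adj c c'
  symm := ⟨by rintro (a|c) (a'|c') h <;> simp_all <;> [exact G₁.adj_symm h; exact G₂.adj_symm h]⟩
  loopless := ⟨by rintro (a|c) h <;> [exact G₁.loopless.irrefl _ h; exact G₂.loopless.irrefl _ h]⟩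

@[simp] lemma crossGraph_comap_inl {β γ : Type*} (G₁ : SimpleGraph β) (G₂ : SimpleGraph γ)
    (b : β → γ → Prop) : (crossGraph G₁ G₂ b).comap Sum.inl = G₁ := rfl

@[simp] lemma crossGraph_comap_inr {β γ : Type*} (G₁ : SimpleGraph β) (G₂ : SimpleGraph γ)
    (b : β → γ → Prop) : (crossGraph G₁ G₂ b).comap Sum.inr = G₂ := rfl

lemma comap_inf {β γ : Type*} (f : β → γ) (K K' : SimpleGraph γ) :
    (K ⊓ K').comap f = K.comap f ⊓ K'.comap f := rfl

/-- The structure equiv for graphs on a sum type. -/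
def sumGraphEquiv (β γ : Type*) :
    SimpleGraph β × SimpleGraph γ × (β → γ → Prop) ≃ SimpleGraph (β ⊕ γ) where
  toFun p := crossGraph p.1 p.2.1 p.2.2
  invFun K := (K.comap Sum.inl, K.comap Sum.inr, fun a c => K.Adj (.inl a) (.inr c))
  left_inv p := by
    obtain ⟨G₁, G₂, b⟩ := p
    refine Prod.ext rfl (Prod.ext rfl ?_)
    rfl
  right_inv K := by
    ext x y
    rcases x with a | c <;> rcases y with a' | c' <;> simp [crossGraph]
    exact K.adj_comm _ _

/-- Transport graphs along an equiv of vertex types. -/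
def graphCongr {β γ : Type*} (e : β ≃ γ) : SimpleGraph β ≃ SimpleGraph γ where
  toFun G := G.comap e.symm
  invFun H := H.comap e
  left_inv G := by ext a b; simp
  right_inv H := by ext a b; simp

lemma containsCopy_graphCongr {α β γ : Type*} {Γ : SimpleGraph α} (e : β ≃ γ)
    {G : SimpleGraph β} (h : ContainsCopy Γ G) : ContainsCopy Γ (graphCongr e G) := by
  obtain ⟨f, hf⟩ := h
  exact ⟨f.trans e.toEmbedding, fun a b hab => by simpa [graphCongr] using hf a b hab⟩

lemma graphCongr_inf {β γ : Type*} (e : β ≃ γ) (K K' : SimpleGraph β) :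
    graphCongr e K ⊓ graphCongr e K' = graphCongr e (K ⊓ K') := rfl

lemma containsCopy_sum {α : Type*} (Γ : SimpleGraph α) {n m k l : ℕ}
    (K : SimpleGraph (Fin n ⊕ Fin m))
    (h1 : ContainsCopy (disjointUnion Γ k) (K.comap Sum.inl))
    (h2 : ContainsCopy (disjointUnion Γ l) (K.comap Sum.inr)) :
    ContainsCopy (disjointUnion Γ (k + l)) K := by
  obtain ⟨f1, hf1⟩ := h1
  obtain ⟨f2, hf2⟩ := h2
  let e : α × Fin (k + l) ≃ (α × Fin k) ⊕ (α × Fin l) :=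
    ((Equiv.refl α).prodCongr finSumFinEquiv.symm).trans (Equiv.prodSumDistrib α (Fin k) (Fin l))
  refine ⟨e.toEmbedding.trans (f1.sumMap f2), ?_⟩
  rintro ⟨a, i⟩ ⟨a', i'⟩ (⟨hii, hadj⟩ : i = i' ∧ Γ.Adj a a')
  subst hii
  simp only [Function.Embedding.trans_apply, Equiv.coe_toEmbedding]
  rcases h : finSumFinEquiv.symm i with i₁ | i₂ <;>
    simp only [e, Equiv.trans_apply, Equiv.prodCongr_apply, Equiv.coe_refl, Prod.map_apply,
      id_eq, h, Equiv.prodSumDistrib_apply_left, Equiv.prodSumDistrib_apply_right,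
      Function.Embedding.sumMap, Function.Embedding.coeFn_mk, Sum.map_inl, Sum.map_inr]
  · exact hf1 (a, i₁) (a', i₁) ⟨rfl, hadj⟩
  · exact hf2 (a, i₂) (a', i₂) ⟨rfl, hadj⟩

lemma choose_two_add (n m : ℕ) : (n + m).choose 2 = n.choose 2 + m.choose 2 + n * m := by
  induction m with
  | zero => simp
  | succ m ih =>
      have h1 : (n + (m + 1)) = (n + m) + 1 := by ring
      rw [h1, Nat.choose_succ_succ, Nat.choose_succ_succ m 1, ih]
      simp [Nat.choose_one_right]
      ring

lemma ncard_prod {β γ : Type*} (s : Set β) (t : Set γ) :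
    (s ×ˢ t).ncard = s.ncard * t.ncard := by
  rw [← Nat.card_coe_set_eq, ← Nat.card_coe_set_eq, ← Nat.card_coe_set_eq,
    Nat.card_congr (Equiv.Set.prod s t), Nat.card_prod]

lemma ncard_univ_fun (n m : ℕ) :
    (Set.univ : Set (Fin n → Fin m → Prop)).ncard = 2 ^ (n * m) := by
  rw [Set.ncard_univ, Nat.card_eq_fintype_card]
  simp [Fintype.card_fun, ← pow_mul, mul_comm]

lemma zero_mem_muSet (N : ℕ) (P : SimpleGraph (Fin N) → Prop) :
    (0 : ℝ) ∈ {x : ℝ | ∃ F : Set (SimpleGraph (Fin N)),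
      (∀ G ∈ F, ∀ H ∈ F, P (G ⊓ H)) ∧ x = F.ncard / 2 ^ N.choose 2} :=
  ⟨∅, by simp, by simp⟩

lemma bddAbove_muSet (N : ℕ) (P : SimpleGraph (Fin N) → Prop) :
    BddAbove {x : ℝ | ∃ F : Set (SimpleGraph (Fin N)),
      (∀ G ∈ F, ∀ H ∈ F, P (G ⊓ H)) ∧ x = F.ncard / 2 ^ N.choose 2} := by
  refine ⟨(Fintype.card (SimpleGraph (Fin N)) : ℝ) / 2 ^ N.choose 2, ?_⟩
  rintro x ⟨F, -, rfl⟩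
  have hle : F.ncard ≤ Fintype.card (SimpleGraph (Fin N)) := by
    have := Set.ncard_le_ncard (Set.subset_univ F) Set.finite_univ
    rwa [Set.ncard_univ, Nat.card_eq_fintype_card] at this
  have : (F.ncard : ℝ) ≤ (Fintype.card (SimpleGraph (Fin N)) : ℝ) := by exact_mod_cast hle
  gcongr

lemma nonneg_of_mem_muSet (N : ℕ) (P : SimpleGraph (Fin N) → Prop) {x : ℝ}
    (hx : x ∈ {x : ℝ | ∃ F : Set (SimpleGraph (Fin N)),
      (∀ G ∈ F, ∀ H ∈ F, P (G ⊓ H)) ∧ x = F.ncard / 2 ^ N.choose 2}) : 0 ≤ x := by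
  obtain ⟨F, -, rfl⟩ := hx
  positivity

lemma mu_mul_le {α : Type*} (Γ : SimpleGraph α) (k l n m : ℕ) :
    mu n (fun K => ContainsCopy (disjointUnion Γ k) K) *
      mu m (fun K => ContainsCopy (disjointUnion Γ l) K) ≤
    mu (n + m) (fun K => ContainsCopy (disjointUnion Γ (k + l)) K) := by
  set P₁ := fun K : SimpleGraph (Fin n) => ContainsCopy (disjointUnion Γ k) K with hP₁
  set P₂ := fun K : SimpleGraph (Fin m) => ContainsCopy (disjointUnion Γ l) K with hP₂
  set P₃ := fun K : SimpleGraph (Fin (n + m)) => ContainsCopy (disjointUnion Γ (k + l)) K with hP₃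
  set S₁ := {x : ℝ | ∃ F : Set (SimpleGraph (Fin n)),
      (∀ G ∈ F, ∀ H ∈ F, P₁ (G ⊓ H)) ∧ x = F.ncard / 2 ^ n.choose 2} with hS₁
  set S₂ := {x : ℝ | ∃ F : Set (SimpleGraph (Fin m)),
      (∀ G ∈ F, ∀ H ∈ F, P₂ (G ⊓ H)) ∧ x = F.ncard / 2 ^ m.choose 2} with hS₂
  set S₃ := {x : ℝ | ∃ F : Set (SimpleGraph (Fin (n + m))),
      (∀ G ∈ F, ∀ H ∈ F, P₃ (G ⊓ H)) ∧ x = F.ncard / 2 ^ (n + m).choose 2} with hS₃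
  -- closure under products
  have closure : ∀ x ∈ S₁, ∀ y ∈ S₂, x * y ∈ S₃ := by
    rintro x ⟨F₁, hF₁, rfl⟩ y ⟨F₂, hF₂, rfl⟩
    set Φ : SimpleGraph (Fin n) × SimpleGraph (Fin m) × (Fin n → Fin m → Prop) →
        SimpleGraph (Fin (n + m)) :=
      fun p => graphCongr finSumFinEquiv (sumGraphEquiv (Fin n) (Fin m) p) with hΦ
    have hΦinj : Function.Injective Φ := fun p q h =>
      (sumGraphEquiv (Fin n) (Fin m)).injective ((graphCongr finSumFinEquiv).injective h)
    refine ⟨Φ '' (F₁ ×ˢ F₂ ×ˢ Set.univ), ?_, ?_⟩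
    · rintro K ⟨⟨G₁, G₂, b⟩, hp, rfl⟩ K' ⟨⟨G₁', G₂', b'⟩, hq, rfl⟩
      obtain ⟨hG₁, hG₂, -⟩ := hp
      obtain ⟨hG₁', hG₂', -⟩ := hq
      rw [hΦ]
      show P₃ (graphCongr finSumFinEquiv _ ⊓ graphCongr finSumFinEquiv _)
      rw [graphCongr_inf]
      apply containsCopy_graphCongr
      apply containsCopy_sum Γ
      · exact hF₁ G₁ hG₁ G₁' hG₁'
      · exact hF₂ G₂ hG₂ G₂' hG₂'
    · rw [Set.ncard_image_of_injective _ hΦinj, ncard_prod, ncard_prod, ncard_univ_fun,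
        choose_two_add]
      push_cast
      rw [pow_add, pow_add]
      have h1 : (2 : ℝ) ^ n.choose 2 ≠ 0 := by positivity
      have h2 : (2 : ℝ) ^ m.choose 2 ≠ 0 := by positivity
      have h3 : (2 : ℝ) ^ (n * m) ≠ 0 := by positivity
      field_simp
  have ne₁ : S₁.Nonempty := ⟨0, zero_mem_muSet n P₁⟩
  have ne₂ : S₂.Nonempty := ⟨0, zero_mem_muSet m P₂⟩
  have bdd₃ := bddAbove_muSet (n + m) P₃
  have key : ∀ x ∈ S₁, ∀ y ∈ S₂, x * y ≤ sSup S₃ :=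
    fun x hx y hy => le_csSup bdd₃ (closure x hx y hy)
  have hM : 0 ≤ sSup S₃ := le_csSup bdd₃ (zero_mem_muSet (n + m) P₃)
  have h2nonneg : 0 ≤ sSup S₂ := le_csSup_of_le (bddAbove_muSet m P₂) (zero_mem_muSet m P₂) le_rfl
  have step1 : ∀ x ∈ S₁, x * sSup S₂ ≤ sSup S₃ := by
    intro x hx
    rcases (nonneg_of_mem_muSet n P₁ hx).lt_or_eq with hx0 | hx0
    · rw [mul_comm, ← le_div_iff₀ hx0]
      refine csSup_le ne₂ fun y hy => (le_div_iff₀ hx0).mpr ?_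
      rw [mul_comm]
      exact key x hx y hy
    · rw [← hx0, zero_mul]; exact hM
  show sSup S₁ * sSup S₂ ≤ sSup S₃
  rcases h2nonneg.lt_or_eq with h2 | h2
  · rw [← le_div_iff₀ h2]
    exact csSup_le ne₁ fun x hx => (le_div_iff₀ h2).mpr (step1 x hx)
  · rw [← h2, mul_zero]; exact hM

/-- With `a t = lim_{n→∞} μ(contains Γ_t, n)`, we have `a (k+l) ≥ a k * a l`. -/
theorem limit_mu_supermultiplicative {α : Type*} (Γ : SimpleGraph α)
    (hΓ : Γ.edgeSet.Nonempty) (a : ℕ → ℝ)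
    (ha : ∀ t, 1 ≤ t →
      Filter.Tendsto (fun n => mu n (fun K => ContainsCopy (disjointUnion Γ t) K))
        Filter.atTop (nhds (a t)))
    (k l : ℕ) (hk : 1 ≤ k) (hl : 1 ≤ l) :
    a k * a l ≤ a (k + l) := by
  have hdouble : Filter.Tendsto (fun n : ℕ => n + n) Filter.atTop Filter.atTop :=
    Filter.tendsto_atTop_mono (fun n => Nat.le_add_left n n) Filter.tendsto_id
  have t1 : Filter.Tendsto
      (fun n => mu (n + n) (fun K => ContainsCopy (disjointUnion Γ (k + l)) K))
      Filter.atTop (nhds (a (k + l))) :=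
    (ha (k + l) (by omega)).comp hdouble
  have t2 : Filter.Tendsto
      (fun n => mu n (fun K => ContainsCopy (disjointUnion Γ k) K) *
        mu n (fun K => ContainsCopy (disjointUnion Γ l) K))
      Filter.atTop (nhds (a k * a l)) := (ha k hk).mul (ha l hl)
  exact le_of_tendsto_of_tendsto' t2 t1 fun n => mu_mul_le Γ k l n n
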